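/- Let A = {a_n} be a sequence of positive integers, let f and g be asymptotically stable growth functions, and let σ be a permutation of the positive integers. If a_n ~ f(n) and a_{σ(n)} ~ g(n), then f(n) ~ g(n) as n → ∞. -/

import Mathlib

/-- A growth function: positive, strictly increasing, continuous and unbounded on `[1,∞)`. -/
def IsGrowthFun (f : ℝ → ℝ) : Prop :=
  (∀ x ≥ (1 : ℝ), 0 < f x) ∧ StrictMonoOn f (Set.Ici 1) ∧
    ContinuousOn f (Set.Ici 1) ∧ Filter.Tendsto f Filter.atTop Filter.atTop

lemma key_half (a : ℕ → ℕ) (hapos : ∀ n, 0 < a n) (f g : ℝ → ℝ) (σ : ℕ → ℕ)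
    (hf : IsGrowthFun f) (hg : IsGrowthFun g) (hσ : Function.Bijective σ)
    (h1 : Filter.Tendsto (fun n : ℕ => (a n : ℝ) / f n) Filter.atTop (nhds 1))
    (h2 : Filter.Tendsto (fun n : ℕ => (a (σ n) : ℝ) / g n) Filter.atTop (nhds 1))
    (ε : ℝ) (hε : 0 < ε) :
    ∀ᶠ n : ℕ in Filter.atTop, f n ≤ (1 + ε) * g n := by
  have hσt : Filter.Tendsto σ Filter.atTop Filter.atTop := by
    rw [← Nat.cofinite_eq_atTop]
    exact hσ.injective.tendsto_cofinite
  have hcomp : Filter.Tendsto (fun n : ℕ => (a (σ n) : ℝ) / f (σ n))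
      Filter.atTop (nhds 1) := h1.comp hσt
  have hfg : Filter.Tendsto (fun n : ℕ => f (σ n) / g n) Filter.atTop (nhds 1) := by
    have hd := h2.div hcomp one_ne_zero
    rw [div_one] at hd
    refine hd.congr' ?_
    filter_upwards [hσt.eventually_ge_atTop 1, Filter.eventually_ge_atTop 1] with n hn hn1
    have hfp : 0 < f (σ n) := hf.1 _ (by exact_mod_cast hn)
    have hgp : 0 < g n := hg.1 _ (by exact_mod_cast hn1)
    have hap : (0 : ℝ) < (a (σ n) : ℝ) := by exact_mod_cast hapos (σ n)
    rw [Pi.div_apply]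
    field_simp
  -- eventually f (σ m) ≤ (1+ε) g m, together with m ≥ 1
  have hev : ∀ᶠ m : ℕ in Filter.atTop, f (σ m) ≤ (1 + ε) * g m ∧ 1 ≤ m := by
    have hlt : ∀ᶠ m : ℕ in Filter.atTop, f (σ m) / g m < 1 + ε :=
      hfg.eventually_lt_const (by linarith)
    filter_upwards [hlt, Filter.eventually_ge_atTop 1] with m hm hm1
    have hgp : 0 < g m := hg.1 _ (by exact_mod_cast hm1)
    exact ⟨le_of_lt ((div_lt_iff₀ hgp).mp hm), hm1⟩
  obtain ⟨N, hN⟩ := Filter.eventually_atTop.mp hev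
  set M := (Finset.range N).sup σ with hM
  filter_upwards [Filter.eventually_ge_atTop (max N (M + 1))] with n hn
  have hnN : N ≤ n := le_trans (le_max_left _ _) hn
  have hnM : M + 1 ≤ n := le_trans (le_max_right _ _) hn
  -- find k ≤ n with σ k ≥ n
  have hk : ∃ k ≤ n, n ≤ σ k := by
    by_contra hcon
    push_neg at hcon
    have hcard : (Finset.range (n + 1)).card ≤ (Finset.range n).card := by
      apply Finset.card_le_card_of_injOn σ
      · intro k hkmem
        simp only [Finset.mem_coe, Finset.mem_range] at hkmem ⊢
        exact hcon k (Nat.lt_succ_iff.mp hkmem)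
      · exact fun x _ y _ h => hσ.injective h
    simp only [Finset.card_range] at hcard
    omega
  obtain ⟨k, hkn, hnk⟩ := hk
  have hkN : N ≤ k := by
    by_contra hcon
    push_neg at hcon
    have : σ k ≤ M := Finset.le_sup (Finset.mem_range.mpr hcon)
    omega
  obtain ⟨hfk, hk1⟩ := hN k hkN
  have hn1 : 1 ≤ n := le_trans hk1 hkn
  have hσk1 : 1 ≤ σ k := le_trans hn1 hnk
  have hfmono : MonotoneOn f (Set.Ici 1) := hf.2.1.monotoneOn
  have hgmono : MonotoneOn g (Set.Ici 1) := hg.2.1.monotoneOn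
  have h1n : (1 : ℝ) ≤ (n : ℝ) := by exact_mod_cast hn1
  have h1k : (1 : ℝ) ≤ (k : ℝ) := by exact_mod_cast hk1
  have h1σk : (1 : ℝ) ≤ (σ k : ℝ) := by exact_mod_cast hσk1
  have step1 : f n ≤ f (σ k) := hfmono h1n h1σk (by exact_mod_cast hnk)
  have step3 : g k ≤ g n := hgmono h1k h1n (by exact_mod_cast hkn)
  have hεpos : (0 : ℝ) < 1 + ε := by linarith
  calc f n ≤ f (σ k) := step1
    _ ≤ (1 + ε) * g k := hfk
    _ ≤ (1 + ε) * g n := by nlinarith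

/-- If a sequence of positive integers is asymptotic to an asymptotically stable growth
function `f`, and a rearrangement of it is asymptotic to an asymptotically stable growth
function `g`, then `f(n) ~ g(n)`. -/
theorem stmt5 (a : ℕ → ℕ) (hapos : ∀ n, 0 < a n) (f g : ℝ → ℝ) (σ : ℕ → ℕ)
    (hf : IsGrowthFun f)
    (hfs : ∀ Δ > (0 : ℝ),
      Filter.Tendsto (fun x => f (x + Δ) / f x) Filter.atTop (nhds 1))
    (hg : IsGrowthFun g)
    (hgs : ∀ Δ > (0 : ℝ),
      Filter.Tendsto (fun x => g (x + Δ) / g x) Filter.atTop (nhds 1))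
    (hσ : Function.Bijective σ)
    (h1 : Filter.Tendsto (fun n : ℕ => (a n : ℝ) / f n) Filter.atTop (nhds 1))
    (h2 : Filter.Tendsto (fun n : ℕ => (a (σ n) : ℝ) / g n) Filter.atTop (nhds 1)) :
    Filter.Tendsto (fun n : ℕ => f n / g n) Filter.atTop (nhds 1) := by
  set e := Equiv.ofBijective σ hσ with he
  have hτ : Function.Bijective (⇑e.symm) := e.symm.bijective
  have hστ : ∀ n, σ (e.symm n) = n := fun n => e.apply_symm_apply n
  have h1' : Filter.Tendsto (fun n : ℕ => ((a (σ (e.symm n)) : ℝ)) / f n)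
      Filter.atTop (nhds 1) := by
    simpa only [hστ] using h1
  rw [Metric.tendsto_nhds]
  intro ε hε
  have h3 := key_half a hapos f g σ hf hg hσ h1 h2 (ε / 2) (by linarith)
  have h4 := key_half (fun n => a (σ n)) (fun n => hapos _) g f (⇑e.symm) hg hf hτ h2 h1'
    (ε / 2) (by linarith)
  filter_upwards [h3, h4, Filter.eventually_ge_atTop 1] with n hfgn hgfn hn1
  have h1n : (1 : ℝ) ≤ (n : ℝ) := by exact_mod_cast hn1
  have hfp : 0 < f n := hf.1 _ h1n
  have hgp : 0 < g n := hg.1 _ h1n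
  rw [Real.dist_eq, abs_sub_lt_iff]
  constructor
  · have : f n / g n ≤ 1 + ε / 2 := (div_le_iff₀ hgp).mpr hfgn
    linarith
  · have hlow : (1 - ε) * g n < f n := by nlinarith
    have : 1 - ε < f n / g n := (lt_div_iff₀ hgp).mpr (by linarith)
    linarith
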